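/- Fix s ∈ (0,1). As T → ∞ over the integers, ( Σ_{k=1}^{T−1} m(k/T)² )^{−1} · Σ_{k=1}^{T−1} g(⌊Ts⌋/T, k/T)² · m(k/T) converges to (3/2) · m(s)² · (1 + 2m(s)). That is, for ordinary least squares weights w_k ≡ 1, the quantity h_T(s; w) converges to h_ols(s) = (3/2) m(s)² (1 + 2m(s)). -/

import Mathlib

/-- `m(s) = s(1-s)`. -/
noncomputable def m (s : ℝ) : ℝ := s * (1 - s)

/-- `g(s,t) = min(s,t)·(1 - max(s,t))`. -/
noncomputable def g (s t : ℝ) : ℝ := min s t * (1 - max s t)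

/-- numerator polynomial (in `x = K/T`, `u = 1/T`). -/
noncomputable def numP (x u : ℝ) : ℝ :=
  x*u^4/30 + x^2/20 + x^2*u^2/6 - x^2*u^4/30 - x^3*u^2/3 - x^4/4 + x^4*u^2/6
    + 3*x^5/10 - x^6/10

/-- denominator polynomial (in `u = 1/T`). -/
noncomputable def denP (u : ℝ) : ℝ := (1 - u^4)/30

lemma sumA (t : ℝ) (n : ℕ) :
    ∑ k ∈ Finset.range n, ((k:ℝ)^3*t - (k:ℝ)^4) =
      (n:ℝ)/30 + (n:ℝ)^2*t/4 - (n:ℝ)^3/3 - (n:ℝ)^3*t/2 + (n:ℝ)^4/2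
        + (n:ℝ)^4*t/4 - (n:ℝ)^5/5 := by
  induction n with
  | zero => simp
  | succ n ih => rw [Finset.sum_range_succ, ih]; push_cast; ring

lemma sumB (t : ℝ) (n : ℕ) :
    ∑ k ∈ Finset.range n, ((k:ℝ)*t^3 - 3*(k:ℝ)^2*t^2 + 3*(k:ℝ)^3*t - (k:ℝ)^4) =
      (n:ℝ)/30 - (n:ℝ)*t^2/2 - (n:ℝ)*t^3/2 + 3*(n:ℝ)^2*t/4 + 3*(n:ℝ)^2*t^2/2
        + (n:ℝ)^2*t^3/2 - (n:ℝ)^3/3 - 3*(n:ℝ)^3*t/2 - (n:ℝ)^3*t^2 + (n:ℝ)^4/2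
        + 3*(n:ℝ)^4*t/4 - (n:ℝ)^5/5 := by
  induction n with
  | zero => simp
  | succ n ih => rw [Finset.sum_range_succ, ih]; push_cast; ring

lemma sumD (t : ℝ) (n : ℕ) :
    ∑ k ∈ Finset.range n, ((k:ℝ)^2*t^2 - 2*(k:ℝ)^3*t + (k:ℝ)^4) =
      -(n:ℝ)/30 + (n:ℝ)*t^2/6 - (n:ℝ)^2*t/2 - (n:ℝ)^2*t^2/2 + (n:ℝ)^3/3
        + (n:ℝ)^3*t + (n:ℝ)^3*t^2/3 - (n:ℝ)^4/2 - (n:ℝ)^4*t/2 + (n:ℝ)^5/5 := by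
  induction n with
  | zero => simp
  | succ n ih => rw [Finset.sum_range_succ, ih]; push_cast; ring

lemma sum_Ico_one (f : ℕ → ℝ) (n : ℕ) (h : f 0 = 0) :
    ∑ k ∈ Finset.Ico 1 n, f k = ∑ k ∈ Finset.range n, f k := by
  rcases Nat.eq_zero_or_pos n with h0 | h0
  · subst h0; simp
  · rw [Finset.range_eq_Ico, ← Finset.sum_Ico_consecutive f (Nat.zero_le 1) h0]
    simp [h]

lemma numP_cont : Continuous fun p : ℝ × ℝ => numP p.1 p.2 := by
  unfold numP; fun_prop

lemma denP_cont : Continuous denP := by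
  unfold denP; fun_prop

set_option maxHeartbeats 1000000 in
/-- Fix `s ∈ (0,1)`. For ordinary least squares weights `w ≡ 1`,
`h_T(s; w)` converges to `h_ols(s) = (3/2) m(s)² (1 + 2 m(s))` as `T → ∞`. -/
theorem stmt7 (s : ℝ) (hs : s ∈ Set.Ioo (0 : ℝ) 1) :
    Filter.Tendsto
      (fun T : ℕ =>
        (∑ k ∈ Finset.Icc 1 (T - 1), (m ((k : ℝ) / T)) ^ 2)⁻¹ *
          ∑ k ∈ Finset.Icc 1 (T - 1),
            (g ((⌊(T : ℝ) * s⌋ : ℝ) / T) ((k : ℝ) / T)) ^ 2 * m ((k : ℝ) / T))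
      Filter.atTop (nhds ((3 / 2) * (m s) ^ 2 * (1 + 2 * m s))) := by
  obtain ⟨hs0, hs1⟩ := hs
  -- limit of the floor ratio
  have ha : Filter.Tendsto (fun T : ℕ => (⌊(T : ℝ) * s⌋ : ℝ) / T)
      Filter.atTop (nhds s) := by
    have hlow : Filter.Tendsto (fun T : ℕ => s - 1 / (T:ℝ)) Filter.atTop (nhds s) := by
      simpa using tendsto_const_nhds.sub (tendsto_one_div_atTop_nhds_zero_nat (𝕜 := ℝ))
    refine tendsto_of_tendsto_of_tendsto_of_le_of_le' hlow tendsto_const_nhds ?_ ?_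
    · filter_upwards [Filter.eventually_ge_atTop 1] with T hT
      have hT0 : (0:ℝ) < T := by exact_mod_cast hT
      have hfl := (Int.sub_one_lt_floor ((T:ℝ) * s)).le
      rw [sub_le_iff_le_add, ← add_div, le_div_iff₀ hT0]
      calc s * T = (T:ℝ) * s - 1 + 1 := by ring
        _ ≤ (⌊(T : ℝ) * s⌋ : ℝ) + 1 := by linarith
    · filter_upwards [Filter.eventually_ge_atTop 1] with T hT
      have hT0 : (0:ℝ) < T := by exact_mod_cast hT
      rw [div_le_iff₀ hT0]
      calc (⌊(T : ℝ) * s⌋ : ℝ) ≤ (T:ℝ) * s := Int.floor_le _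
        _ = s * T := by ring
  have hu : Filter.Tendsto (fun T : ℕ => 1 / (T:ℝ)) Filter.atTop (nhds 0) :=
    tendsto_one_div_atTop_nhds_zero_nat
  -- the limit of the rational function
  have hcont : Filter.Tendsto
      (fun T : ℕ => numP ((⌊(T : ℝ) * s⌋ : ℝ) / T) (1 / (T:ℝ)) / denP (1 / (T:ℝ)))
      Filter.atTop (nhds (numP s 0 / denP 0)) := by
    have hp := ha.prodMk_nhds hu
    have hnum := (numP_cont.tendsto (s, 0)).comp hp
    have hden := (denP_cont.tendsto 0).comp hu
    exact hnum.div hden (by norm_num [denP])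
  have hval : numP s 0 / denP 0 = (3 / 2) * (m s) ^ 2 * (1 + 2 * m s) := by
    simp only [numP, denP, m]
    norm_num
    ring
  rw [← hval]
  refine hcont.congr' ?_
  -- eventual equality
  have hTs : Filter.Tendsto (fun T : ℕ => (T:ℝ) * s) Filter.atTop Filter.atTop :=
    (tendsto_natCast_atTop_atTop).atTop_mul_const hs0
  filter_upwards [Filter.eventually_ge_atTop 2, hTs.eventually_ge_atTop 1] with T hT2 h1
  have hT0 : (0:ℝ) < T := by positivity
  have hT0' : (T:ℝ) ≠ 0 := ne_of_gt hT0
  set K : ℕ := (⌊(T:ℝ) * s⌋).toNat with hKdef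
  have hfl1 : (1:ℤ) ≤ ⌊(T:ℝ) * s⌋ := by
    rw [Int.le_floor]; exact_mod_cast h1
  have hfloor : ((⌊(T : ℝ) * s⌋ : ℤ) : ℝ) = (K : ℝ) := by
    rw [hKdef]; norm_cast
    exact (Int.toNat_of_nonneg (by linarith)).symm
  have hK1 : 1 ≤ K := by
    rw [hKdef]; omega
  have hKT : K < T := by
    have : ⌊(T:ℝ) * s⌋ < (T:ℤ) := by
      rw [Int.floor_lt]; push_cast
      nlinarith
    omega
  have hIcc : Finset.Icc 1 (T - 1) = Finset.Ico 1 T := by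
    rw [← Finset.Ico_add_one_right_eq_Icc]
    congr 1
    omega
  rw [hIcc, hfloor]
  -- rewrite the denominator sum
  have hden : ∑ k ∈ Finset.Ico 1 T, (m ((k : ℝ) / T)) ^ 2
      = ((T:ℝ)^5 - (T:ℝ)) / (30 * (T:ℝ)^4) := by
    rw [sum_Ico_one _ _ (by simp [m])]
    have he : ∀ k ∈ Finset.range T, (m ((k : ℝ) / T)) ^ 2
        = ((k:ℝ)^2*(T:ℝ)^2 - 2*(k:ℝ)^3*(T:ℝ) + (k:ℝ)^4) / (T:ℝ)^4 := by
      intro k _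
      simp only [m]
      field_simp
      ring
    rw [Finset.sum_congr rfl he, ← Finset.sum_div, sumD]
    ring
  -- rewrite the numerator sum
  have hnum : ∑ k ∈ Finset.Ico 1 T,
      (g ((K : ℝ) / T) ((k : ℝ) / T)) ^ 2 * m ((k : ℝ) / T)
      = ((T:ℝ) - K)^2 / (T:ℝ)^6 *
          (((K:ℝ)+1)/30 + ((K:ℝ)+1)^2*(T:ℝ)/4 - ((K:ℝ)+1)^3/3 - ((K:ℝ)+1)^3*(T:ℝ)/2
            + ((K:ℝ)+1)^4/2 + ((K:ℝ)+1)^4*(T:ℝ)/4 - ((K:ℝ)+1)^5/5)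
        + (K:ℝ)^2 / (T:ℝ)^6 *
          (((T:ℝ)/30 - (T:ℝ)*(T:ℝ)^2/2 - (T:ℝ)*(T:ℝ)^3/2 + 3*(T:ℝ)^2*(T:ℝ)/4
              + 3*(T:ℝ)^2*(T:ℝ)^2/2 + (T:ℝ)^2*(T:ℝ)^3/2 - (T:ℝ)^3/3 - 3*(T:ℝ)^3*(T:ℝ)/2
              - (T:ℝ)^3*(T:ℝ)^2 + (T:ℝ)^4/2 + 3*(T:ℝ)^4*(T:ℝ)/4 - (T:ℝ)^5/5)
            - (((K:ℝ)+1)/30 - ((K:ℝ)+1)*(T:ℝ)^2/2 - ((K:ℝ)+1)*(T:ℝ)^3/2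
              + 3*((K:ℝ)+1)^2*(T:ℝ)/4 + 3*((K:ℝ)+1)^2*(T:ℝ)^2/2 + ((K:ℝ)+1)^2*(T:ℝ)^3/2
              - ((K:ℝ)+1)^3/3 - 3*((K:ℝ)+1)^3*(T:ℝ)/2 - ((K:ℝ)+1)^3*(T:ℝ)^2
              + ((K:ℝ)+1)^4/2 + 3*((K:ℝ)+1)^4*(T:ℝ)/4 - ((K:ℝ)+1)^5/5)) := by
    rw [← Finset.sum_Ico_consecutive _ (by omega : 1 ≤ K + 1) (by omega : K + 1 ≤ T)]
    have hpiece1 : ∑ k ∈ Finset.Ico 1 (K+1),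
        (g ((K : ℝ) / T) ((k : ℝ) / T)) ^ 2 * m ((k : ℝ) / T)
        = ((T:ℝ) - K)^2 / (T:ℝ)^6 *
            ∑ k ∈ Finset.range (K+1), ((k:ℝ)^3*(T:ℝ) - (k:ℝ)^4) := by
      rw [sum_Ico_one _ _ (by simp [m, g]), Finset.mul_sum]
      refine Finset.sum_congr rfl fun k hk => ?_
      have hkK : (k:ℝ) / T ≤ (K:ℝ) / T := by
        gcongr
        exact_mod_cast Nat.lt_succ_iff.mp (Finset.mem_range.mp hk)
      simp only [g, m, min_eq_right hkK, max_eq_left hkK]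
      field_simp
    have hpiece2 : ∑ k ∈ Finset.Ico (K+1) T,
        (g ((K : ℝ) / T) ((k : ℝ) / T)) ^ 2 * m ((k : ℝ) / T)
        = (K:ℝ)^2 / (T:ℝ)^6 *
            ∑ k ∈ Finset.Ico (K+1) T,
              ((k:ℝ)*(T:ℝ)^3 - 3*(k:ℝ)^2*(T:ℝ)^2 + 3*(k:ℝ)^3*(T:ℝ) - (k:ℝ)^4) := by
      rw [Finset.mul_sum]
      refine Finset.sum_congr rfl fun k hk => ?_
      have hk1 : K + 1 ≤ k := (Finset.mem_Ico.mp hk).1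
      have hkK : (K:ℝ) / T ≤ (k:ℝ) / T := by
        gcongr
        exact_mod_cast Nat.le_of_succ_le hk1
      simp only [g, m, min_eq_left hkK, max_eq_right hkK]
      field_simp
      ring
    rw [hpiece1, hpiece2, Finset.sum_Ico_eq_sub _ (by omega : K + 1 ≤ T), sumA, sumB, sumB]
    push_cast
    ring
  rw [hden, hnum]
  -- final algebraic identity
  have hr2 : (2:ℝ) ≤ (T:ℝ) := by exact_mod_cast hT2
  have h2sq : (4:ℝ) ≤ (T:ℝ)^2 := by nlinarith
  have h4 : (16:ℝ) ≤ (T:ℝ)^4 := by nlinarith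
  have hQ : (T:ℝ)^5 - (T:ℝ) ≠ 0 := by nlinarith
  have hden0 : denP (1 / (T:ℝ)) ≠ 0 := by
    have h1' : (1/(T:ℝ))^4 < 1 :=
      pow_lt_one₀ (by positivity) (by rw [div_lt_one hT0]; linarith) (by norm_num)
    unfold denP
    apply ne_of_gt
    apply div_pos (by linarith) (by norm_num)
  symm
  rw [eq_div_iff hden0]
  unfold numP denP
  have hT4 : (T:ℝ)^4 - 1 ≠ 0 := by nlinarith
  have hT4' : -1 + (T:ℝ)^4 ≠ 0 := by nlinarith
  field_simp
  ring
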